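/- arXiv:2301.04071 — 2 statements merged into one kernel-verified Lean document; each statement's English description precedes it below -/
import Mathlib

section
/- Let g : ℝ → ℝ be C⁴ with g(y) = O(y⁴) near 0. Then any solution y(x) of y'(x) = y² + g(y) with y(0) < 0 sufficiently small is defined for all x ≥ 0, satisfies y(x) < 0 and y(x) → 0 as x → ∞, and obeys the asymptotic expansion y(x) = -1/x + O(1/x²) as x → ∞. -/
open Real Set Asymptotics Filter

set_option maxHeartbeats 1600000 in
/-- If g is C⁴ with g(y) = O(y⁴) near 0, then for all sufficiently small negative initial
data the solution of y' = y² + g(y) exists globally for x ≥ 0, stays negative, converges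
to 0, and satisfies y(x) = -1/x + O(1/x²) as x → ∞. -/
theorem degenerate_saddle_asymptotics (g : ℝ → ℝ) (hg : ContDiff ℝ 4 g)
    (hgo : g =O[nhds 0] fun y : ℝ => y ^ 4) :
    ∃ δ : ℝ, 0 < δ ∧ ∀ y₀ ∈ Set.Ioo (-δ) (0 : ℝ),
      (∃ y : ℝ → ℝ, y 0 = y₀ ∧
        ∀ x ∈ Set.Ici (0 : ℝ),
          HasDerivWithinAt y ((y x) ^ 2 + g (y x)) (Set.Ici (0 : ℝ)) x) ∧
      (∀ y : ℝ → ℝ, y 0 = y₀ →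
        (∀ x ∈ Set.Ici (0 : ℝ),
          HasDerivWithinAt y ((y x) ^ 2 + g (y x)) (Set.Ici (0 : ℝ)) x) →
        (∀ x : ℝ, 0 ≤ x → y x < 0) ∧
        Tendsto y atTop (nhds 0) ∧
        ∃ C X : ℝ, 0 < C ∧ 0 < X ∧ ∀ x : ℝ, X ≤ x → |y x + 1 / x| ≤ C / x ^ 2) := by
  classical
  obtain ⟨c, hc⟩ := hgo.bound
  obtain ⟨ε, hε0, hε⟩ := Metric.eventually_nhds_iff.mp hc
  set K : ℝ := max c 1 with hKdef
  have hK1 : (1:ℝ) ≤ K := le_max_right _ _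
  have hK0 : (0:ℝ) < K := one_pos.trans_le hK1
  set δ₀ : ℝ := min ε (1/(2*K)) with hδ₀def
  have hδ₀0 : 0 < δ₀ := lt_min hε0 (by positivity)
  have hδ₀K : K * δ₀^2 ≤ 1/4 := by
    have h1 : δ₀ ≤ 1/(2*K) := min_le_right _ _
    have h1' : δ₀ * (2*K) ≤ 1 := (le_div_iff₀ (by positivity)).mp h1
    nlinarith [h1', hδ₀0.le, hK1, hK0, mul_nonneg hδ₀0.le hK0.le]
  have hgK : ∀ z : ℝ, |z| < δ₀ → |g z| ≤ K * z^4 := by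
    intro z hz
    have hzε : dist z 0 < ε := by
      simpa [Real.dist_eq] using hz.trans_le (min_le_left _ _)
    have h1 := hε hzε
    have hz4 : (0:ℝ) ≤ z^4 := by positivity
    calc |g z| ≤ c * |z^4| := by simpa [Real.norm_eq_abs] using h1
      _ = c * z^4 := by rw [abs_of_nonneg hz4]
      _ ≤ K * z^4 := mul_le_mul_of_nonneg_right (le_max_left _ _) hz4
  clear_value K δ₀
  set f : ℝ → ℝ := fun z => z^2 + g z with hfdef
  set U : Set ℝ := Ioo (-δ₀) 0 with hUdef
  have hUopen : IsOpen U := isOpen_Ioo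
  have hUabs : ∀ z ∈ U, |z| < δ₀ := fun z hz => abs_lt.2 ⟨hz.1, hz.2.trans hδ₀0⟩
  have hfl : ∀ z ∈ U, 3/4 * z^2 ≤ f z := by
    intro z hz
    have h1 := hgK z (hUabs z hz)
    have h2 : z^2 ≤ δ₀^2 := sq_le_sq' (hz.1.le) (hz.2.le.trans hδ₀0.le)
    have h3 : K * z^4 ≤ 1/4 * z^2 := by
      nlinarith [h2, hδ₀K, sq_nonneg z, hK0.le, mul_nonneg hK0.le (sq_nonneg z)]
    have h4 := (abs_le.mp (h1.trans h3)).1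
    simp only [hfdef]
    linarith
  have hf0 : ∀ z ∈ U, 0 < f z := by
    intro z hz
    have h := hfl z hz
    have hzlt : z < 0 := hz.2
    have hz2 : 0 < z^2 := by nlinarith
    calc (0:ℝ) < 3/4 * z^2 := by linarith
      _ ≤ f z := h
  have hgc : Continuous g := hg.continuous
  have hfc : Continuous f := by
    simp only [hfdef]; exact (continuous_pow 2).add hgc
  have hφc : ContinuousOn (fun z => (f z)⁻¹) U :=
    ContinuousOn.inv₀ hfc.continuousOn (fun z hz => (hf0 z hz).ne')
  refine ⟨δ₀/2, by positivity, ?_⟩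
  intro y₀ hy₀
  have hy₀U : y₀ ∈ U := ⟨by linarith [hy₀.1, hδ₀0], hy₀.2⟩
  have hy₀inv : 1/y₀ < 0 := one_div_neg.2 hy₀.2
  set F : ℝ → ℝ := fun y => ∫ z in y₀..y, (f z)⁻¹ with hFdef
  have hUoc : OrdConnected U := ordConnected_Ioo
  have hInt : ∀ a ∈ U, ∀ b ∈ U, IntervalIntegrable (fun z => (f z)⁻¹) MeasureTheory.volume a b :=
    fun a ha b hb => (hφc.mono (hUoc.uIcc_subset ha hb)).intervalIntegrable
  have hFd : ∀ a ∈ U, HasStrictDerivAt F (f a)⁻¹ a := by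
    intro a ha
    exact intervalIntegral.integral_hasStrictDerivAt_right (hInt _ hy₀U _ ha)
      (hφc.stronglyMeasurableAtFilter hUopen a ha)
      (hφc.continuousAt (hUopen.mem_nhds ha))
  have hFy₀ : F y₀ = 0 := intervalIntegral.integral_same
  have hFmono : ∀ a ∈ U, ∀ b ∈ U, a < b → F a < F b := by
    intro a ha b hb hab
    have hiab := hInt a ha b hb
    have h1 : F a + ∫ z in a..b, (f z)⁻¹ = F b :=
      intervalIntegral.integral_add_adjacent_intervals (hInt _ hy₀U _ ha) hiab
    have h2 : 0 < ∫ z in a..b, (f z)⁻¹ :=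
      intervalIntegral.intervalIntegral_pos_of_pos_on hiab
        (fun x hx => inv_pos.2 (hf0 x ⟨lt_trans ha.1 hx.1, hx.2.trans hb.2⟩)) hab
    linarith
  set M : ℝ := 4*K/3*δ₀ with hMdef
  have hM0 : 0 < M := by positivity
  clear_value M
  have hFbound : ∀ z ∈ Ico y₀ (0:ℝ), |F z - (1/y₀ - 1/z)| ≤ M := by
    intro z hz
    have hzU : z ∈ U := ⟨lt_of_lt_of_le hy₀U.1 hz.1, hz.2⟩
    have hz0 : z < 0 := hz.2
    have hy₀0 : y₀ < 0 := hy₀.2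
    have hInt1 := hInt _ hy₀U _ hzU
    have hψc : ContinuousOn (fun w : ℝ => (w^2)⁻¹) U := by
      apply ContinuousOn.inv₀ (continuous_pow 2).continuousOn
      intro w hw
      have hwlt : w < 0 := hw.2
      exact pow_ne_zero 2 hwlt.ne
    have hψint : IntervalIntegrable (fun w : ℝ => (w^2)⁻¹) MeasureTheory.volume y₀ z :=
      (hψc.mono (hUoc.uIcc_subset hy₀U hzU)).intervalIntegrable
    have h0mem : (0:ℝ) ∉ uIcc y₀ z := by
      rw [uIcc_of_le hz.1]
      intro h
      exact absurd h.2 (not_le.2 hz0)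
    have hψval : (∫ w in y₀..z, (w^2)⁻¹) = 1/y₀ - 1/z := by
      have heq : (fun w : ℝ => (w^2)⁻¹) = fun w : ℝ => w ^ (-2:ℤ) := by
        funext w
        rw [zpow_neg]
        norm_cast
      rw [heq, integral_zpow (Or.inr ⟨by decide, h0mem⟩)]
      have hzne : z ≠ 0 := hz0.ne
      have hy₀ne : y₀ ≠ 0 := hy₀0.ne
      norm_num
      field_simp
      ring
    have hsplit : F z - (1/y₀ - 1/z) = ∫ w in y₀..z, ((f w)⁻¹ - (w^2)⁻¹) := by
      rw [intervalIntegral.integral_sub hInt1 hψint, hψval]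
    rw [hsplit]
    have hb : ∀ w ∈ Set.uIoc y₀ z, ‖(f w)⁻¹ - (w^2)⁻¹‖ ≤ 4*K/3 := by
      intro w hw
      rw [uIoc_of_le hz.1] at hw
      have hwU : w ∈ U := ⟨lt_trans hy₀U.1 hw.1, lt_of_le_of_lt hw.2 hz0⟩
      have hw0 : w < 0 := hwU.2
      have hw2 : 0 < w^2 := by nlinarith
      have hfw := hf0 w hwU
      have hflw := hfl w hwU
      have hgw := hgK w (hUabs w hwU)
      have he : (f w)⁻¹ - (w^2)⁻¹ = (-(g w)) / (f w * w^2) := by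
        rw [inv_sub_inv hfw.ne' (pow_ne_zero 2 hw0.ne)]
        congr 1
        simp only [hfdef]
        ring
      rw [Real.norm_eq_abs, he, abs_div, abs_of_pos (mul_pos hfw hw2), abs_neg]
      rw [div_le_iff₀ (mul_pos hfw hw2)]
      nlinarith [hgw, hflw, sq_nonneg w, hK0.le, hw2, mul_nonneg hK0.le (sq_nonneg (w^2))]
    have hnorm := intervalIntegral.norm_integral_le_of_norm_le_const hb
    rw [Real.norm_eq_abs] at hnorm
    have h1 : |z - y₀| ≤ δ₀ := by
      rw [abs_of_nonneg (sub_nonneg.2 hz.1)]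
      linarith [hy₀U.1, hz0]
    calc |∫ w in y₀..z, ((f w)⁻¹ - (w^2)⁻¹)| ≤ 4*K/3 * |z - y₀| := hnorm
      _ ≤ 4*K/3 * δ₀ := mul_le_mul_of_nonneg_left h1 (by positivity)
      _ = M := hMdef.symm
  -- surjectivity of F onto [0, ∞)
  have hsurj : ∀ x : ℝ, 0 ≤ x → ∃ a ∈ Ico y₀ (0:ℝ), F a = x := by
    intro x hx
    set R : ℝ := x + M + 1 - 1/y₀ with hRdef
    clear_value R
    have hR0 : 0 < R := by rw [hRdef]; linarith
    set b : ℝ := -(1/R) with hbdef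
    clear_value b
    have hb0 : b < 0 := by
      have : 0 < 1/R := by positivity
      rw [hbdef]; linarith
    have hbinv : 1/b = -R := by
      simp only [hbdef]
      field_simp
    have hby₀ : y₀ < b := by
      have hyinv : y₀ * (1/y₀) = 1 := mul_one_div_cancel hy₀.2.ne
      have h1 : 1 < (-y₀) * R := by
        have hp : 0 < x + M + 1 := by linarith
        have hmp := mul_pos (neg_pos.2 hy₀.2) hp
        have hexp : (-y₀) * R = (-y₀)*(x+M+1) + y₀*(1/y₀) := by
          simp only [hRdef]; ring
        rw [hexp, hyinv]
        linarith
      have h2 : 1/R < -y₀ := (div_lt_iff₀ hR0).mpr (by linarith)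
      simp only [hbdef]
      linarith
    have hbIco : b ∈ Ico y₀ (0:ℝ) := ⟨hby₀.le, hb0⟩
    have hFb : x + 1 ≤ F b := by
      have h := (abs_le.mp (hFbound b hbIco)).1
      rw [hbinv] at h
      simp only [hRdef] at h ⊢
      linarith
    have hcont : ContinuousOn F (Icc y₀ b) := fun w hw =>
      ((hFd w ⟨lt_of_lt_of_le hy₀U.1 hw.1, lt_of_le_of_lt hw.2 hb0⟩).hasDerivAt.continuousAt).continuousWithinAt
    have hIVT := intermediate_value_Icc hby₀.le hcont
    have hxmem : x ∈ Icc (F y₀) (F b) := ⟨by rw [hFy₀]; exact hx, by linarith⟩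
    obtain ⟨a, ha, hFa⟩ := hIVT hxmem
    exact ⟨a, ⟨ha.1, lt_of_le_of_lt ha.2 hb0⟩, hFa⟩
  have hFinj : InjOn F U := by
    intro a ha b hb hab
    by_contra hne
    rcases lt_or_gt_of_ne hne with h | h
    · exact absurd hab (ne_of_lt (hFmono a ha b hb h))
    · exact absurd hab.symm (ne_of_lt (hFmono b hb a ha h))
  -- any solution has F (y t) = t as long as it stays in U
  have hid : ∀ (y : ℝ → ℝ), y 0 = y₀ →
      (∀ x ∈ Ici (0:ℝ), HasDerivWithinAt y ((y x)^2 + g (y x)) (Ici 0) x) →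
      ∀ T, 0 ≤ T → (∀ t ∈ Icc (0:ℝ) T, y t ∈ U) → ∀ t ∈ Icc (0:ℝ) T, F (y t) = t := by
    intro y hy0 hyd T hT hmem
    have ycont : ContinuousOn y (Ici (0:ℝ)) := fun s hs => (hyd s hs).continuousWithinAt
    have h := eq_of_has_deriv_right_eq (a := 0) (b := T)
      (f := fun t => F (y t)) (f' := fun _ => (1:ℝ)) (g := fun t => t)
      ?_ ?_ ?_ ?_ ?_
    · exact h
    · intro t ht
      have htmem := hmem t ⟨ht.1, ht.2.le⟩
      have hyt : HasDerivWithinAt y ((y t)^2 + g (y t)) (Ici t) t :=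
        (hyd t ht.1).mono (Ici_subset_Ici.2 ht.1)
      have hFt : HasDerivAt F (f (y t))⁻¹ (y t) := (hFd (y t) htmem).hasDerivAt
      have hcomp := hFt.comp_hasDerivWithinAt t hyt
      have : (f (y t))⁻¹ * ((y t)^2 + g (y t)) = 1 := by
        have : f (y t) = (y t)^2 + g (y t) := rfl
        rw [← this]
        exact inv_mul_cancel₀ (hf0 _ htmem).ne'
      rw [this] at hcomp
      exact hcomp
    · intro t ht
      exact (hasDerivWithinAt_id t (Ici t))
    · intro t ht
      exact ((hFd (y t) (hmem t ht)).hasDerivAt.continuousAt).comp_continuousWithinAt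
        ((ycont.mono (fun s hs => hs.1)) t ht)
    · exact continuousOn_id
    · show F (y 0) = (0:ℝ)
      rw [hy0, hFy₀]
  -- any solution stays trapped and satisfies F(y x) = x
  have hsol : ∀ (y : ℝ → ℝ), y 0 = y₀ →
      (∀ x ∈ Ici (0:ℝ), HasDerivWithinAt y ((y x)^2 + g (y x)) (Ici 0) x) →
      ∀ x : ℝ, 0 ≤ x → (y x ∈ Ico y₀ (0:ℝ) ∧ F (y x) = x) := by
    intro y hy0 hyd
    have ycont : ContinuousOn y (Ici (0:ℝ)) := fun s hs => (hyd s hs).continuousWithinAt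
    have hall : ∀ t : ℝ, 0 ≤ t → y t ∈ U := by
      by_contra hE
      push_neg at hE
      obtain ⟨t₂, ht₂0, ht₂⟩ := hE
      set S : Set ℝ := Ici 0 ∩ y ⁻¹' Uᶜ with hSdef
      have hSne : S.Nonempty := ⟨t₂, ht₂0, ht₂⟩
      have hSc : IsClosed S :=
        ycont.preimage_isClosed_of_isClosed isClosed_Ici hUopen.isClosed_compl
      have hSbdd : BddBelow S := ⟨0, fun s hs => hs.1⟩
      set t₁ : ℝ := sInf S with ht₁def
      have ht₁S : t₁ ∈ S := hSc.csInf_mem hSne hSbdd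
      have ht₁0 : 0 ≤ t₁ := ht₁S.1
      have hlt : ∀ t : ℝ, 0 ≤ t → t < t₁ → y t ∈ U := by
        intro t h0 hl
        by_contra hn
        exact absurd (csInf_le hSbdd ⟨h0, hn⟩) (not_le.2 hl)
      have ht₁pos : 0 < t₁ := by
        rcases ht₁0.lt_or_eq with h | h
        · exact h
        · exfalso
          apply ht₁S.2
          show y t₁ ∈ U
          rw [← h, hy0]
          exact hy₀U
      have hid' : ∀ t : ℝ, 0 ≤ t → t < t₁ → F (y t) = t := by
        intro t h0 hl
        exact hid y hy0 hyd t h0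
          (fun s hs => hlt s hs.1 (lt_of_le_of_lt hs.2 hl)) t ⟨h0, le_refl t⟩
      have hyge : ∀ t : ℝ, 0 ≤ t → t < t₁ → y₀ ≤ y t := by
        intro t h0 hl
        by_contra hn
        push_neg at hn
        have := hFmono (y t) (hlt t h0 hl) y₀ hy₀U hn
        rw [hid' t h0 hl, hFy₀] at this
        linarith
      have hclo : t₁ ∈ closure (Ico (0:ℝ) t₁) := by
        rw [closure_Ico (ne_of_lt ht₁pos)]
        exact ⟨ht₁0, le_refl _⟩
      haveI hne : (nhdsWithin t₁ (Ico (0:ℝ) t₁)).NeBot :=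
        mem_closure_iff_nhdsWithin_neBot.mp hclo
      have hyt : Tendsto y (nhdsWithin t₁ (Ico (0:ℝ) t₁)) (nhds (y t₁)) :=
        (ycont t₁ ht₁0).mono_left (nhdsWithin_mono _ (fun s hs => hs.1))
      have hmemev : ∀ᶠ t in nhdsWithin t₁ (Ico (0:ℝ) t₁), t ∈ Ico (0:ℝ) t₁ :=
        eventually_mem_nhdsWithin
      have hyt₁ge : y₀ ≤ y t₁ :=
        ge_of_tendsto hyt (hmemev.mono fun t ht => hyge t ht.1 ht.2)
      have hyt₁le : y t₁ ≤ 0 :=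
        le_of_tendsto hyt (hmemev.mono fun t ht => (hlt t ht.1 ht.2).2.le)
      have hyt₁0 : y t₁ = 0 := by
        rcases hyt₁le.lt_or_eq with h | h
        · exact absurd (show y t₁ ∈ U from ⟨lt_of_lt_of_le hy₀U.1 hyt₁ge, h⟩) ht₁S.2
        · exact h
      set D : ℝ := t₁ + M + 1 - 1/y₀ with hDdef
      clear_value D
      have hD0 : 0 < D := by rw [hDdef]; linarith
      have hev : ∀ᶠ t in nhdsWithin t₁ (Ico (0:ℝ) t₁), -(1/D) < y t := by
        rw [hyt₁0] at hyt
        apply hyt.eventually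
        apply eventually_gt_nhds
        have : 0 < 1/D := by positivity
        linarith
      obtain ⟨t, htmem, hty⟩ := (hmemev.and hev).exists
      have h0t : 0 ≤ t := htmem.1
      have hlt' : t < t₁ := htmem.2
      have hU' := hlt t h0t hlt'
      have hFt := hid' t h0t hlt'
      have hbd := (abs_le.mp (hFbound (y t) ⟨hyge t h0t hlt', hU'.2⟩)).1
      rw [hFt] at hbd
      have hyt0 : y t < 0 := hU'.2
      have hinv : 1/(y t) < -D := by
        rw [div_lt_iff_of_neg hyt0]
        have h5 : D * (-(1/D)) < D * (y t) := mul_lt_mul_of_pos_left hty hD0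
        have h6 : D * (-(1/D)) = -1 := by field_simp
        linarith
      have hcontr : t₁ + 1 < t := by
        simp only [hDdef] at hinv
        linarith
      linarith
    intro x hx
    have hFx : F (y x) = x :=
      hid y hy0 hyd x hx (fun s hs => hall s hs.1) x ⟨hx, le_refl x⟩
    have hyge : y₀ ≤ y x := by
      by_contra hn
      push_neg at hn
      have := hFmono (y x) (hall x hx) y₀ hy₀U hn
      rw [hFx, hFy₀] at this
      linarith
    exact ⟨⟨hyge, (hall x hx).2⟩, hFx⟩
  -- construct the solution as an inverse function
  have huex : ∀ x : ℝ, 0 ≤ x → ∃ a ∈ U, F a = x := by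
    intro x hx
    obtain ⟨a, ha, h⟩ := hsurj x hx
    exact ⟨a, ⟨lt_of_lt_of_le hy₀U.1 ha.1, ha.2⟩, h⟩
  set u : ℝ → ℝ := Function.invFunOn F U with hudef
  have huU : ∀ x : ℝ, 0 ≤ x → u x ∈ U := fun x hx => Function.invFunOn_mem (huex x hx)
  have huF : ∀ x : ℝ, 0 ≤ x → F (u x) = x := fun x hx => Function.invFunOn_eq (huex x hx)
  have hu0 : u 0 = y₀ := hFinj (huU 0 le_rfl) hy₀U (by rw [huF 0 le_rfl, hFy₀])
  have hud : ∀ x ∈ Ici (0:ℝ), HasDerivWithinAt u ((u x)^2 + g (u x)) (Ici 0) x := by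
    intro x hx
    have hxU := huU x hx
    have hFdx := hFd (u x) hxU
    have hne : (f (u x))⁻¹ ≠ 0 := inv_ne_zero (hf0 _ hxU).ne'
    have hevU : ∀ᶠ z in nhds (u x), u (F z) = z := by
      filter_upwards [hUopen.mem_nhds hxU] with z hz
      exact hFinj.leftInvOn_invFunOn hz
    have h := hFdx.to_local_left_inverse hne hevU
    rw [huF x hx, inv_inv] at h
    exact h.hasDerivAt.hasDerivWithinAt
  refine ⟨⟨u, hu0, hud⟩, ?_⟩
  intro y hy0 hyd
  have hkey := hsol y hy0 hyd
  set M₁ : ℝ := M - 1/y₀ with hM₁def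
  clear_value M₁
  have hM₁0 : 0 < M₁ := by rw [hM₁def]; linarith
  have hasym : ∀ x : ℝ, 2*M₁+1 ≤ x → |y x + 1/x| ≤ (2*M₁)/x^2 := by
    intro x hX
    have hx0 : 0 < x := by linarith
    obtain ⟨hyIco, hFx⟩ := hkey x hx0.le
    have hbd0 := hFbound (y x) hyIco
    rw [hFx] at hbd0
    have hbd := abs_le.mp hbd0
    have hyneg : y x < 0 := hyIco.2
    have hwneg : 1/(y x) < 0 := one_div_neg.2 hyneg
    have h2 : x/2 ≤ -(1/(y x)) := by linarith [hbd.2, hX, hM₁def, hy₀inv]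
    have h3 : |x + 1/(y x)| ≤ M₁ := by
      rw [abs_le]
      constructor <;> simp only [hM₁def] <;> [linarith [hbd.1]; linarith [hbd.2]]
    have hyne : y x ≠ 0 := ne_of_lt hyneg
    have hxne : x ≠ 0 := ne_of_gt hx0
    have hxy : y x + 1/x = (x + 1/(y x)) / ((1/(y x)) * x) := by
      field_simp
    rw [hxy, abs_div]
    have hden : x^2/2 ≤ |(1/(y x)) * x| := by
      rw [abs_mul, abs_of_pos hx0, abs_of_neg hwneg]
      nlinarith [h2, hx0]
    have hden0 : 0 < x^2/2 := by positivity
    calc |x + 1/(y x)| / |(1/(y x))*x| ≤ M₁ / (x^2/2) :=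
          div_le_div₀ hM₁0.le h3 hden0 hden
      _ = 2*M₁/x^2 := by
          field_simp
  refine ⟨fun x hx => (hkey x hx).1.2, ?_, 2*M₁, 2*M₁+1, by linarith, by linarith, hasym⟩
  -- convergence to 0
  have h1 : Tendsto (fun x : ℝ => 1/x) atTop (nhds 0) := by
    simpa using (tendsto_inv_atTop_zero (𝕜 := ℝ))
  have h2 : Tendsto (fun x : ℝ => (2*M₁)/x^2) atTop (nhds (0:ℝ)) := by
    have h := ((tendsto_pow_atTop (n := 2) (by norm_num)) :
      Tendsto (fun x : ℝ => x ^ 2) atTop atTop).inv_tendsto_atTop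
    have h' := h.const_mul (2*M₁)
    simpa [div_eq_mul_inv, Pi.inv_def] using h'
  have hlow : Tendsto (fun x : ℝ => -(1/x) - (2*M₁)/x^2) atTop (nhds 0) := by
    have := (h1.neg.sub h2)
    simpa using this
  have hup : Tendsto (fun x : ℝ => -(1/x) + (2*M₁)/x^2) atTop (nhds 0) := by
    have := (h1.neg.add h2)
    simpa using this
  apply tendsto_of_tendsto_of_tendsto_of_le_of_le' hlow hup
  · filter_upwards [eventually_ge_atTop (2*M₁+1)] with x hx
    linarith [(abs_le.mp (hasym x hx)).1]
  · filter_upwards [eventually_ge_atTop (2*M₁+1)] with x hx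
    linarith [(abs_le.mp (hasym x hx)).2]
end

section
/- Let g : ℝ → ℝ be C³ with g(y) = O(|y|³) near 0. Then any solution y(x) of y' = y² + g(y) with y(0) < 0 sufficiently small satisfies, for every β ∈ [0,1), the expansion y(x) = -1/x + O(x^{-(1+β)}) as x → ∞. -/
open Real Set Asymptotics Filter

/-- Invariance: the solution stays in `(-δ, 0)` for all `x ≥ 0`. -/
lemma cubic_aux_invariant (g : ℝ → ℝ) (δ : ℝ) (hδ0 : 0 < δ)
    (hgb : ∀ z : ℝ, z ∈ Set.Ioo (-δ) (0:ℝ) → |g z| ≤ z ^ 2 / 2)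
    (y : ℝ → ℝ) (hy0 : y 0 ∈ Set.Ioo (-δ) (0 : ℝ))
    (hy' : ∀ x ∈ Set.Ici (0 : ℝ),
      HasDerivWithinAt y ((y x) ^ 2 + g (y x)) (Set.Ici (0 : ℝ)) x) :
    ∀ x, 0 ≤ x → y x ∈ Set.Ioo (-δ) (0 : ℝ) := by
  have hyc : ContinuousOn y (Ici 0) := fun x hx => (hy' x hx).continuousWithinAt
  by_contra hbad
  push_neg at hbad
  obtain ⟨x₀, hx₀, hyx₀⟩ := hbad
  set B : Set ℝ := {x : ℝ | 0 ≤ x ∧ y x ∉ Set.Ioo (-δ) (0:ℝ)} with hBdef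
  have hBne : B.Nonempty := ⟨x₀, hx₀, hyx₀⟩
  have hBbd : BddBelow B := ⟨0, fun x hx => hx.1⟩
  set b := sInf B with hbdef
  have hb0 : 0 ≤ b := le_csInf hBne fun x hx => hx.1
  have hlt : ∀ t, 0 ≤ t → t < b → y t ∈ Set.Ioo (-δ) (0:ℝ) := by
    intro t ht htb
    by_contra h
    exact absurd (csInf_le hBbd ⟨ht, h⟩) (not_le.2 htb)
  have hyb : y b ∉ Set.Ioo (-δ) (0:ℝ) := by
    intro h
    have hcb : ContinuousWithinAt y (Ici b) b :=
      ((hy' b hb0).continuousWithinAt).mono (Ici_subset_Ici.mpr hb0)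
    have hev : ∀ᶠ t in nhdsWithin b (Ici b), y t ∈ Set.Ioo (-δ) (0:ℝ) :=
      hcb.eventually (isOpen_Ioo.eventually_mem h)
    obtain ⟨v, hv, hsub⟩ := mem_nhdsGE_iff_exists_Ico_subset.1 hev
    have hvb : v ≤ b := by
      apply le_csInf hBne
      intro z hz
      by_contra hzv
      push_neg at hzv
      rcases lt_or_ge z b with h1 | h1
      · exact hz.2 (hlt z hz.1 h1)
      · exact hz.2 (hsub ⟨h1, hzv⟩)
    exact absurd hv (not_lt.2 hvb)
  have hbpos : 0 < b := by
    rcases eq_or_lt_of_le hb0 with h | h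
    · exact absurd (h ▸ hy0) hyb
    · exact h
  -- lower bound: y b ≥ y 0
  have hlow : ∀ x ∈ Set.Icc 0 b, -(y x) ≤ -(y 0) := by
    have := image_le_of_deriv_right_le_deriv_boundary
      (f := fun t => -(y t)) (f' := fun t => -((y t) ^ 2 + g (y t)))
      (a := 0) (b := b)
      (hf := ((hyc.mono (Icc_subset_Ici_self)).neg))
      (hf' := fun x hx => ((hy' x hx.1).mono (Ici_subset_Ici.mpr hx.1)).neg)
      (B := fun _ => -(y 0)) (B' := fun _ => 0)
      (ha := le_refl _)
      (hB := continuousOn_const)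
      (hB' := fun x _ => hasDerivWithinAt_const _ _ _)
      (bound := ?_)
    · exact fun x hx => this hx
    · intro x hx
      have hyx := hlt x hx.1 hx.2
      have hgx := hgb (y x) hyx
      have := abs_le.1 hgx
      show -((y x) ^ 2 + g (y x)) ≤ (0:ℝ)
      nlinarith [this.1, sq_nonneg (y x)]
  -- upper bound: strict fencing with B t = -(a0 * (1 + 2*a0*t)⁻¹)
  set a0 : ℝ := -(y 0) with ha0def
  have ha0pos : 0 < a0 := by simp only [ha0def]; linarith [hy0.2]
  have hBpos : ∀ t : ℝ, 0 ≤ t → 0 < 1 + 2 * a0 * t := by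
    intro t ht; nlinarith
  have hBd : ∀ t : ℝ, 0 ≤ t →
      HasDerivAt (fun s => -(a0 * (1 + 2 * a0 * s)⁻¹))
        (2 * a0 ^ 2 * ((1 + 2 * a0 * t) ^ 2)⁻¹) t := by
    intro t ht
    have hne : (1 + 2 * a0 * t) ≠ 0 := ne_of_gt (hBpos t ht)
    have h1 : HasDerivAt (fun s : ℝ => 1 + 2 * a0 * s) (2 * a0) t := by
      simpa using ((hasDerivAt_id t).const_mul (2 * a0)).const_add (1:ℝ)
    have h2 := h1.inv hne
    have h3 := (h2.const_mul a0).neg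
    refine h3.congr_deriv ?_
    field_simp
  have hupp : ∀ x ∈ Set.Icc 0 b, y x ≤ -(a0 * (1 + 2 * a0 * x)⁻¹) := by
    have := image_le_of_deriv_right_lt_deriv_boundary'
      (f := y) (f' := fun t => (y t) ^ 2 + g (y t)) (a := 0) (b := b)
      (hf := hyc.mono (Icc_subset_Ici_self))
      (hf' := fun x hx => (hy' x hx.1).mono (Ici_subset_Ici.mpr hx.1))
      (B := fun s => -(a0 * (1 + 2 * a0 * s)⁻¹))
      (B' := fun s => 2 * a0 ^ 2 * ((1 + 2 * a0 * s) ^ 2)⁻¹)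
      (ha := by simp [ha0def])
      (hB := ?_) (hB' := ?_) (bound := ?_)
    · exact fun x hx => this hx
    · intro x hx
      exact (hBd x hx.1).continuousAt.continuousWithinAt
    · intro x hx
      exact (hBd x hx.1).hasDerivWithinAt
    · intro x hx hcontact
      have hyx := hlt x hx.1 hx.2
      have hgx := hgb (y x) hyx
      have hnex : (1 + 2 * a0 * x) ≠ 0 := ne_of_gt (hBpos x hx.1)
      have h2 : 2 * a0 ^ 2 * ((1 + 2 * a0 * x) ^ 2)⁻¹ = 2 * (y x) ^ 2 := by
        rw [hcontact]
        field_simp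
      show y x ^ 2 + g (y x) < 2 * a0 ^ 2 * ((1 + 2 * a0 * x) ^ 2)⁻¹
      rw [h2]
      have := abs_le.1 hgx
      nlinarith [hyx.2, sq_nonneg (y x), this.2]
  have h1 := hlow b ⟨hb0, le_refl b⟩
  have h2 := hupp b ⟨hb0, le_refl b⟩
  have h3 : 0 < 1 + 2 * a0 * b := hBpos b hb0
  exact hyb ⟨by linarith [hy0.1], by
    have : 0 < a0 * (1 + 2 * a0 * b)⁻¹ := by positivity
    linarith⟩

set_option maxHeartbeats 1000000 in
/-- If g is C³ with g(y) = O(|y|³) near 0, then any solution of y' = y² + g(y) with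
sufficiently small negative initial data satisfies, for every β ∈ [0,1),
y(x) = -1/x + O(x^{-(1+β)}) as x → ∞. -/
theorem cubic_perturbation_asymptotics (g : ℝ → ℝ) (hg : ContDiff ℝ 3 g)
    (hgo : g =O[nhds 0] fun y : ℝ => |y| ^ 3) :
    ∃ δ : ℝ, 0 < δ ∧ ∀ y : ℝ → ℝ, y 0 ∈ Set.Ioo (-δ) (0 : ℝ) →
      (∀ x ∈ Set.Ici (0 : ℝ),
        HasDerivWithinAt y ((y x) ^ 2 + g (y x)) (Set.Ici (0 : ℝ)) x) →
      ∀ β ∈ Set.Ico (0 : ℝ) 1,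
        ∃ C X : ℝ, 0 < C ∧ 0 < X ∧
          ∀ x : ℝ, X ≤ x → |y x + 1 / x| ≤ C / x ^ (1 + β : ℝ) := by
  obtain ⟨c, hc0, hcw⟩ := hgo.exists_pos
  have hcb := hcw.bound
  rw [Metric.eventually_nhds_iff] at hcb
  obtain ⟨r, hr0, hball⟩ := hcb
  obtain ⟨M, hMdef⟩ : ∃ v : ℝ, v = max c 1 := ⟨_, rfl⟩
  have hM1 : (1:ℝ) ≤ M := hMdef ▸ le_max_right _ _
  have hMc : c ≤ M := hMdef ▸ le_max_left _ _
  have hM0 : (0:ℝ) < M := lt_of_lt_of_le one_pos hM1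
  obtain ⟨δ, hδdef⟩ : ∃ v : ℝ, v = min (r/2) (1/(2*M)) := ⟨_, rfl⟩
  have hδ0 : 0 < δ := hδdef ▸ lt_min (by linarith) (by positivity)
  have hδa : δ ≤ 1/(2*M) := hδdef ▸ min_le_right _ _
  have hδb : δ ≤ r/2 := hδdef ▸ min_le_left _ _
  have hδM : δ * M ≤ 1/2 := by
    rw [le_div_iff₀ (by positivity : (0:ℝ) < 2*M)] at hδa
    linarith
  have hδr : δ < r := by linarith
  have hδinv : 2*M ≤ δ⁻¹ := by
    have h2 := inv_anti₀ hδ0 hδa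
    calc 2*M = (1/(2*M))⁻¹ := by field_simp
    _ ≤ δ⁻¹ := h2
  have hgb : ∀ z : ℝ, |z| ≤ δ → |g z| ≤ M * |z| ^ 3 := by
    intro z hz
    have hd : dist z 0 < r := by
      rw [Real.dist_eq, sub_zero]; linarith
    have h1 := hball hd
    rw [Real.norm_eq_abs, Real.norm_eq_abs, abs_of_nonneg (by positivity : (0:ℝ) ≤ |z|^3)] at h1
    calc |g z| ≤ c * |z|^3 := h1
    _ ≤ M * |z|^3 := mul_le_mul_of_nonneg_right hMc (by positivity)
  have hgb2 : ∀ z : ℝ, z ∈ Set.Ioo (-δ) (0:ℝ) → |g z| ≤ z ^ 2 / 2 := by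
    intro z hz
    have hza : |z| ≤ δ := by rw [abs_of_neg hz.2]; linarith [hz.1]
    have h1 := hgb z hza
    have h3 : |z|^3 ≤ δ * z^2 := by
      have h4 := mul_le_mul_of_nonneg_right hza (sq_nonneg |z|)
      calc |z|^3 = |z| * |z|^2 := by ring
      _ ≤ δ * |z|^2 := h4
      _ = δ * z^2 := by rw [sq_abs]
    nlinarith [sq_nonneg z, mul_le_mul_of_nonneg_left h3 hM0.le]
  refine ⟨δ, hδ0, ?_⟩
  intro y hy0 hy'
  have hinv := cubic_aux_invariant g δ hδ0 hgb2 y hy0 hy'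
  have hyc : ContinuousOn y (Ici 0) := fun x hx => (hy' x hx).continuousWithinAt
  have hyneg : ∀ x, 0 ≤ x → y x < 0 := fun x hx => (hinv x hx).2
  have hyne : ∀ x, 0 ≤ x → y x ≠ 0 := fun x hx => ne_of_lt (hyneg x hx)
  obtain ⟨u, hudef⟩ : ∃ v : ℝ → ℝ, v = fun t => -(y t)⁻¹ := ⟨_, rfl⟩
  have hux : ∀ t, u t = -(y t)⁻¹ := fun t => by rw [hudef]
  have huy : ∀ x, 0 ≤ x → (u x)⁻¹ = -(y x) := by
    intro x hx
    rw [hux x, inv_neg, inv_inv]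
  have hulb : ∀ x, 0 ≤ x → δ⁻¹ ≤ u x := by
    intro x hx
    have h1 : 0 < -(y x) := by linarith [hyneg x hx]
    have h2 : -(y x) < δ := by linarith [(hinv x hx).1]
    have h3 : δ⁻¹ < (-(y x))⁻¹ := inv_strictAnti₀ h1 h2
    rw [hux x, ← inv_neg]
    exact h3.le
  have hupos : ∀ x, 0 ≤ x → 0 < u x := by
    intro x hx
    exact lt_of_lt_of_le (inv_pos.mpr hδ0) (hulb x hx)
  have hu' : ∀ x, 0 ≤ x → HasDerivWithinAt u (1 + g (y x) / (y x)^2) (Ici 0) x := by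
    intro x hx
    have h := ((hy' x (mem_Ici.mpr hx)).inv (hyne x hx)).neg
    rw [hudef]
    refine h.congr_deriv ?_
    rw [neg_div, neg_neg, add_div, div_self (pow_ne_zero 2 (hyne x hx)), add_comm]
  have herr : ∀ x, 0 ≤ x → |g (y x) / (y x)^2| ≤ M * (-(y x)) := by
    intro x hx
    have hz : |y x| ≤ δ := by
      rw [abs_of_neg (hyneg x hx)]; linarith [(hinv x hx).1]
    have h1 := hgb (y x) hz
    have h2 : (0:ℝ) < (y x)^2 := by
      have := hyne x hx
      positivity
    rw [abs_div, abs_of_pos h2, div_le_iff₀ h2]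
    have h5 : M * |y x|^3 = M * (-(y x)) * (y x)^2 := by
      rw [abs_of_neg (hyneg x hx)]; ring
    linarith
  have herr2 : ∀ x, 0 ≤ x → |g (y x) / (y x)^2| ≤ 1/2 := by
    intro x hx
    have h1 := herr x hx
    have h2 : -(y x) < δ := by linarith [(hinv x hx).1]
    nlinarith [hyneg x hx]
  have hucont : ContinuousOn u (Ici 0) := by
    rw [hudef]
    exact (hyc.inv₀ (fun t ht => hyne t ht)).neg
  have hstep2 : ∀ x, 0 ≤ x → |u x - x - u 0| ≤ 1/2 * x := by
    intro x hx
    have hseg := norm_image_sub_le_of_norm_deriv_right_le_segment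
      (f := fun t => u t - t) (f' := fun t => g (y t) / (y t)^2)
      (a := 0) (b := x) (C := 1/2)
      ((hucont.mono Icc_subset_Ici_self).sub continuousOn_id)
      (fun t ht => by
        have h := ((hu' t ht.1).mono (Ici_subset_Ici.mpr ht.1)).sub
          (hasDerivWithinAt_id t (Ici t))
        refine h.congr_deriv ?_
        ring)
      (fun t ht => by
        rw [Real.norm_eq_abs]
        exact herr2 t ht.1)
    have h := hseg x (right_mem_Icc.mpr hx)
    rw [Real.norm_eq_abs] at h
    calc |u x - x - u 0| = |u x - x - (u 0 - 0)| := by ring_nf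
    _ ≤ 1/2 * (x - 0) := h
    _ = 1/2 * x := by ring
  have hu_lin : ∀ x, 0 ≤ x → u 0 + x/2 ≤ u x := by
    intro x hx
    have h := (abs_le.1 (hstep2 x hx)).1
    linarith
  have hu_half : ∀ x, 0 ≤ x → (1+x)/2 ≤ u x := by
    intro x hx
    have h00 : (2:ℝ) ≤ 2*M := by linarith
    have h0 : (2:ℝ) ≤ u 0 := le_trans h00 (le_trans hδinv (hulb 0 le_rfl))
    have h1 := hu_lin x hx
    linarith
  have hBd' : ∀ t : ℝ, 0 ≤ t →
      HasDerivAt (fun s => 2*M*Real.log (1+s)) (2*M*(1+t)⁻¹) t := by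
    intro t ht
    have h1t : (1:ℝ) + t ≠ 0 := by positivity
    have h1 : HasDerivAt (fun s : ℝ => 1 + s) 1 t := by
      simpa using (hasDerivAt_id t).const_add (1:ℝ)
    have h2 := (Real.hasDerivAt_log h1t).comp t h1
    have h3 := h2.const_mul (2*M)
    refine h3.congr_deriv ?_
    ring
  have hstep3 : ∀ x, 0 ≤ x → |u x - x - u 0| ≤ 2*M*Real.log (1+x) := by
    intro x hx
    have key := image_norm_le_of_norm_deriv_right_le_deriv_boundary'
      (f := fun t => u t - t - u 0) (f' := fun t => g (y t) / (y t)^2)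
      (a := 0) (b := x)
      (((hucont.mono Icc_subset_Ici_self).sub continuousOn_id).sub continuousOn_const)
      (fun t ht => by
        have h := (((hu' t ht.1).mono (Ici_subset_Ici.mpr ht.1)).sub
          (hasDerivWithinAt_id t (Ici t))).sub_const (u 0)
        refine h.congr_deriv ?_
        ring)
      (B := fun t => 2*M*Real.log (1+t)) (B' := fun t => 2*M*(1+t)⁻¹)
      (by simp)
      (fun t ht => (hBd' t ht.1).continuousAt.continuousWithinAt)
      (fun t ht => (hBd' t ht.1).hasDerivWithinAt)
      (fun t ht => by
        rw [Real.norm_eq_abs]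
        have h1 := herr t ht.1
        have h2 : -(y t) ≤ 2*(1+t)⁻¹ := by
          have h4 : (u t)⁻¹ ≤ ((1+t)/2)⁻¹ :=
            inv_anti₀ (by linarith [ht.1] : (0:ℝ) < (1+t)/2) (hu_half t ht.1)
          rw [huy t ht.1] at h4
          calc -(y t) ≤ ((1+t)/2)⁻¹ := h4
          _ = 2*(1+t)⁻¹ := by
            rw [inv_div]
            ring
        calc |g (y t) / (y t)^2| ≤ M * (-(y t)) := h1
        _ ≤ M * (2*(1+t)⁻¹) := mul_le_mul_of_nonneg_left h2 hM0.le
        _ = 2*M*(1+t)⁻¹ := by ring)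
    have h := key (right_mem_Icc.mpr hx)
    rw [Real.norm_eq_abs] at h
    exact h
  intro β hβ
  obtain ⟨hβ0, hβ1⟩ := hβ
  have h1β : (0:ℝ) < 1 - β := by linarith
  have hu0pos : 0 < u 0 := hupos 0 le_rfl
  obtain ⟨C1, hC1def⟩ : ∃ v : ℝ, v = u 0 + 8*M/(1-β) := ⟨_, rfl⟩
  have hC1pos : 0 < C1 := by
    have h1 : 0 < 8*M/(1-β) := by positivity
    rw [hC1def]
    linarith
  refine ⟨2*C1 + 1, 1, by linarith, one_pos, ?_⟩
  intro x hx1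
  have hx0 : (0:ℝ) < x := lt_of_lt_of_le one_pos hx1
  have hxnn : (0:ℝ) ≤ x := hx0.le
  have hrp1 : (1:ℝ) ≤ x^(1-β : ℝ) := Real.one_le_rpow hx1 (by linarith)
  have hrpnn : (0:ℝ) ≤ x^(1-β : ℝ) := Real.rpow_nonneg hxnn _
  have hlog : Real.log (1+x) ≤ 2*x^(1-β:ℝ)/(1-β) := by
    have l1 : Real.log (1+x) ≤ (1+x)^(1-β:ℝ)/(1-β) :=
      Real.log_le_rpow_div (by linarith) h1β
    have l2 : (1+x)^(1-β:ℝ) ≤ (2*x)^(1-β:ℝ) :=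
      Real.rpow_le_rpow (by linarith) (by linarith) (by linarith)
    have l3 : (2*x)^(1-β:ℝ) = 2^(1-β:ℝ) * x^(1-β:ℝ) := Real.mul_rpow (by norm_num) hxnn
    have l4 : (2:ℝ)^(1-β:ℝ) ≤ 2 := by
      calc (2:ℝ)^(1-β:ℝ) ≤ 2^(1:ℝ) :=
        Real.rpow_le_rpow_of_exponent_le (by norm_num) (by linarith)
      _ = 2 := Real.rpow_one 2
    have l5 : (2*x)^(1-β:ℝ) ≤ 2 * x^(1-β:ℝ) := by
      rw [l3]
      exact mul_le_mul_of_nonneg_right l4 hrpnn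
    calc Real.log (1+x) ≤ (1+x)^(1-β:ℝ)/(1-β) := l1
    _ ≤ (2 * x^(1-β:ℝ))/(1-β) := by
      gcongr
      linarith
    _ = 2*x^(1-β:ℝ)/(1-β) := by ring
  have hnum : |u x - x| ≤ C1 * x^(1-β : ℝ) := by
    have h3 := hstep3 x hxnn
    have hlognn : 0 ≤ Real.log (1+x) := Real.log_nonneg (by linarith)
    have habs : |u x - x| ≤ u 0 + 2*M*Real.log (1+x) := by
      have h4 := abs_le.1 h3
      rw [abs_le]
      constructor <;> nlinarith [h4.1, h4.2]
    calc |u x - x| ≤ u 0 + 2*M*Real.log (1+x) := habs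
    _ ≤ u 0 * x^(1-β:ℝ) + 2*M*(2*x^(1-β:ℝ)/(1-β)) :=
      add_le_add (le_mul_of_one_le_right hu0pos.le hrp1)
        (mul_le_mul_of_nonneg_left hlog (by positivity))
    _ = (u 0 + 4*M/(1-β)) * x^(1-β:ℝ) := by
      field_simp
      ring
    _ ≤ C1 * x^(1-β:ℝ) := by
      apply mul_le_mul_of_nonneg_right _ hrpnn
      rw [hC1def]
      have h7 : 0 ≤ 4*M/(1-β) := by positivity
      have h8 : 4*M/(1-β) ≤ 8*M/(1-β) := by
        gcongr
        linarith
      linarith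
  have huxpos : 0 < u x := hupos x hxnn
  have hid : y x + 1/x = (u x - x)/(x * u x) := by
    have h1 : y x ≠ 0 := hyne x hxnn
    rw [hux x]
    have h2 : x * -(y x)⁻¹ ≠ 0 := by
      apply mul_ne_zero (ne_of_gt hx0)
      simp [h1]
    rw [eq_div_iff h2]
    field_simp
    ring
  rw [hid, abs_div, abs_of_pos (mul_pos hx0 huxpos)]
  have hden2 : x * (x/2) ≤ x * u x := by
    have hhalf : x/2 ≤ u x := by
      have h1 := hu_lin x hxnn
      linarith
    exact mul_le_mul_of_nonneg_left hhalf hxnn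
  have hpow : x^(1-β:ℝ) * x^(1+β:ℝ) = x^2 := by
    rw [← Real.rpow_add hx0, show ((1-β)+(1+β) : ℝ) = ((2:ℕ):ℝ) by push_cast; ring,
      Real.rpow_natCast]
  have hxx2 : (0:ℝ) < x * (x/2) := by positivity
  have hrppos : (0:ℝ) < x^(1+β:ℝ) := Real.rpow_pos_of_pos hx0 _
  calc |u x - x| / (x * u x) ≤ (C1 * x^(1-β:ℝ)) / (x * (x/2)) :=
    div_le_div₀ (by positivity) hnum hxx2 hden2
  _ ≤ (2*C1 + 1) / x^(1+β:ℝ) := by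
    rw [div_le_div_iff₀ hxx2 hrppos]
    calc C1 * x^(1-β:ℝ) * x^(1+β:ℝ) = C1 * x^2 := by rw [mul_assoc, hpow]
    _ ≤ (2*C1+1) * (x*(x/2)) := by
      have hq : (2*C1+1)*(x*(x/2)) = C1*x^2 + x^2/2 := by ring
      linarith [sq_nonneg x, hq]
end
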